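/- Let n, n₁, n₂, α₁, α₂ be nonnegative integers with n = max(n₁, α₁, n₂, α₂) and let S be the n×n shift matrix over 𝔽₂. Suppose k is an integer with 0 ≤ k ≤ n such that for every V₁ ∈ 𝔽₂ⁿ with upper n − k coordinates zero there exist X₁, X₂ ∈ 𝔽₂ⁿ with S^{n−n₁}X₁ + S^{n−α₁}X₂ = V₁ and S^{n−α₂}X₁ + S^{n−n₂}X₂ = 0. Then k ≤ max(n₁ − max(α₂ − n₂, 0), α₁ − max(n₂ − α₂, 0)). -/

import Mathlib

/-- The n×n shift matrix over 𝔽₂ : 1's on the first subdiagonal. -/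
def shiftMatrix (n : ℕ) : Matrix (Fin n) (Fin n) (ZMod 2) :=
  fun i j => if (i : ℕ) = (j : ℕ) + 1 then 1 else 0

lemma shiftMatrix_pow_apply (n m : ℕ) (i j : Fin n) :
    ((shiftMatrix n) ^ m) i j = if (i : ℕ) = (j : ℕ) + m then 1 else 0 := by
  induction m generalizing j with
  | zero => simp [Matrix.one_apply, Fin.ext_iff]
  | succ m ih =>
    rw [pow_succ, Matrix.mul_apply]
    by_cases hj : (j : ℕ) + 1 < n
    · rw [Finset.sum_eq_single (⟨(j : ℕ) + 1, hj⟩ : Fin n)]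
      · rw [ih]
        simp only [shiftMatrix, Fin.val_mk, if_pos rfl, mul_one]
        split_ifs with ha hb
        · rfl
        · omega
        · omega
        · rfl
      · intro l _ hl
        have hne : ¬ ((l : ℕ) = (j : ℕ) + 1) := fun hc => hl (Fin.ext hc)
        simp only [shiftMatrix, if_neg hne, mul_zero]
      · intro h; exact absurd (Finset.mem_univ _) h
    · have hz : ∀ l : Fin n, l ∈ Finset.univ →
          ((shiftMatrix n) ^ m) i l * shiftMatrix n l j = 0 := by
        intro l _
        have hlt := l.isLt
        simp only [shiftMatrix]
        rw [if_neg (by omega), mul_zero]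
      rw [Finset.sum_eq_zero hz]
      have hlt := i.isLt
      rw [if_neg (by omega)]

lemma shiftMatrix_pow_mulVec_zero (n m : ℕ) (x : Fin n → ZMod 2) (i : Fin n)
    (hi : (i : ℕ) < m) : ((shiftMatrix n) ^ m).mulVec x i = 0 := by
  simp only [Matrix.mulVec, dotProduct, shiftMatrix_pow_apply]
  apply Finset.sum_eq_zero
  intro j _
  rw [if_neg (by omega), zero_mul]

lemma shiftMatrix_pow_mulVec_eq (n m : ℕ) (x : Fin n → ZMod 2) (i j : Fin n)
    (h : (i : ℕ) = (j : ℕ) + m) : ((shiftMatrix n) ^ m).mulVec x i = x j := by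
  simp only [Matrix.mulVec, dotProduct, shiftMatrix_pow_apply]
  rw [Finset.sum_eq_single j]
  · rw [if_pos h, one_mul]
  · intro l _ hl
    rw [if_neg, zero_mul]
    intro hc
    exact hl (Fin.ext (by omega))
  · intro h; exact absurd (Finset.mem_univ _) h

theorem zero_forcing_realizable_max (n n₁ n₂ α₁ α₂ k : ℕ)
    (hn : n = max (max n₁ α₁) (max n₂ α₂)) (hk : k ≤ n)
    (hreal : ∀ V₁ : Fin n → ZMod 2, (∀ i : Fin n, (i : ℕ) < n - k → V₁ i = 0) →
      ∃ X₁ X₂ : Fin n → ZMod 2,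
        ((shiftMatrix n) ^ (n - n₁)).mulVec X₁ + ((shiftMatrix n) ^ (n - α₁)).mulVec X₂ = V₁ ∧
        ((shiftMatrix n) ^ (n - α₂)).mulVec X₁ + ((shiftMatrix n) ^ (n - n₂)).mulVec X₂ = 0) :
    k ≤ max (n₁ - (α₂ - n₂)) (α₁ - (n₂ - α₂)) := by
  have hn₁ : n₁ ≤ n := hn ▸ le_trans (le_max_left _ _) (le_max_left _ _)
  have hα₁ : α₁ ≤ n := hn ▸ le_trans (le_max_right _ _) (le_max_left _ _)
  have hn₂ : n₂ ≤ n := hn ▸ le_trans (le_max_left _ _) (le_max_right _ _)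
  have hα₂ : α₂ ≤ n := hn ▸ le_trans (le_max_right _ _) (le_max_right _ _)
  by_contra hcon
  push_neg at hcon
  have h1 : n₁ - (α₂ - n₂) < k := lt_of_le_of_lt (le_max_left _ _) hcon
  have h2 : α₁ - (n₂ - α₂) < k := lt_of_le_of_lt (le_max_right _ _) hcon
  have hk1 : 1 ≤ k := by omega
  set i₀ : Fin n := ⟨n - k, by omega⟩ with hi₀
  set V₁ : Fin n → ZMod 2 := fun i => if (i : ℕ) = n - k then 1 else 0 with hV₁
  have hVz : ∀ i : Fin n, (i : ℕ) < n - k → V₁ i = 0 := by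
    intro i hi
    simp only [hV₁]
    rw [if_neg (by omega)]
  obtain ⟨X₁, X₂, e1, e2⟩ := hreal V₁ hVz
  have e1i : ((shiftMatrix n) ^ (n - n₁)).mulVec X₁ i₀
      + ((shiftMatrix n) ^ (n - α₁)).mulVec X₂ i₀ = 1 := by
    have := congrFun e1 i₀
    simp only [Pi.add_apply] at this
    rw [this, hV₁]
    simp [hi₀]
  by_cases hc : n₂ ≤ α₂
  · -- case α₂ ≥ n₂ : bounds are n₁ - (α₂ - n₂) and α₁
    have hα₁k : α₁ < k := by omega
    have ht2 : ((shiftMatrix n) ^ (n - α₁)).mulVec X₂ i₀ = 0 :=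
      shiftMatrix_pow_mulVec_zero n _ X₂ i₀ (by simp only [hi₀]; omega)
    rw [ht2, add_zero] at e1i
    have hkn₁ : k ≤ n₁ := by
      by_contra hkn
      rw [shiftMatrix_pow_mulVec_zero n _ X₁ i₀ (by simp only [hi₀]; omega)] at e1i
      exact absurd e1i (by decide)
    set j : Fin n := ⟨n₁ - k, by omega⟩ with hj
    rw [shiftMatrix_pow_mulVec_eq n _ X₁ i₀ j (by simp only [hi₀, hj]; omega)] at e1i
    set i₁ : Fin n := ⟨(n₁ - k) + (n - α₂), by omega⟩ with hi₁
    have e2i : ((shiftMatrix n) ^ (n - α₂)).mulVec X₁ i₁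
        + ((shiftMatrix n) ^ (n - n₂)).mulVec X₂ i₁ = 0 := by
      have := congrFun e2 i₁
      simpa using this
    rw [shiftMatrix_pow_mulVec_eq n _ X₁ i₁ j (by simp only [hi₁, hj]),
      shiftMatrix_pow_mulVec_zero n _ X₂ i₁ (by simp only [hi₁]; omega), add_zero, e1i] at e2i
    exact absurd e2i (by decide)
  · -- case α₂ < n₂ : bounds are n₁ and α₁ - (n₂ - α₂)
    have hn₁k : n₁ < k := by omega
    have ht1 : ((shiftMatrix n) ^ (n - n₁)).mulVec X₁ i₀ = 0 :=
      shiftMatrix_pow_mulVec_zero n _ X₁ i₀ (by simp only [hi₀]; omega)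
    rw [ht1, zero_add] at e1i
    have hkα₁ : k ≤ α₁ := by
      by_contra hkn
      rw [shiftMatrix_pow_mulVec_zero n _ X₂ i₀ (by simp only [hi₀]; omega)] at e1i
      exact absurd e1i (by decide)
    set j : Fin n := ⟨α₁ - k, by omega⟩ with hj
    rw [shiftMatrix_pow_mulVec_eq n _ X₂ i₀ j (by simp only [hi₀, hj]; omega)] at e1i
    set i₁ : Fin n := ⟨(α₁ - k) + (n - n₂), by omega⟩ with hi₁
    have e2i : ((shiftMatrix n) ^ (n - α₂)).mulVec X₁ i₁
        + ((shiftMatrix n) ^ (n - n₂)).mulVec X₂ i₁ = 0 := by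
      have := congrFun e2 i₁
      simpa using this
    rw [shiftMatrix_pow_mulVec_eq n _ X₂ i₁ j (by simp only [hi₁, hj]),
      shiftMatrix_pow_mulVec_zero n _ X₁ i₁ (by simp only [hi₁]; omega), zero_add, e1i] at e2i
    exact absurd e2i (by decide)
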